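/- For every MM network with output y and every δ > 0, there exists β > 0 such that the SMM network with the same weights and biases and parameter β satisfies |y(x) − y_SMM(x)| ≤ δ for all x ∈ ℝ^d. -/
import Mathlib


/-- The scaled LogSumExp function: `LSE_β(x₁,…,xₙ) = (1/β)·log(∑ i, exp(β·xᵢ))`. -/
noncomputable def lse (β : ℝ) {n : ℕ} (x : Fin n → ℝ) : ℝ :=
  (1 / β) * Real.log (∑ i, Real.exp (β * x i))

/-- Output of a min-max (MM) network: `y(x) = min_k max_j (w^(k,j)·x − b^(k,j))`. -/
noncomputable def mmOut {d K : ℕ} {h : Fin K → ℕ} (hK : 0 < K) (hh : ∀ k, 0 < h k)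
    (w : (k : Fin K) → Fin (h k) → Fin d → ℝ)
    (b : (k : Fin K) → Fin (h k) → ℝ) (x : Fin d → ℝ) : ℝ :=
  haveI : Nonempty (Fin K) := Fin.pos_iff_nonempty.mp hK
  Finset.univ.inf' Finset.univ_nonempty fun k =>
    haveI : Nonempty (Fin (h k)) := Fin.pos_iff_nonempty.mp (hh k)
    Finset.univ.sup' Finset.univ_nonempty fun j => (∑ i, w k j i * x i) - b k j

/-- Output of a smooth min-max (SMM) network. -/
noncomputable def smmOut {d K : ℕ} {h : Fin K → ℕ} (β : ℝ)
    (w : (k : Fin K) → Fin (h k) → Fin d → ℝ)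
    (b : (k : Fin K) → Fin (h k) → ℝ) (x : Fin d → ℝ) : ℝ :=
  lse (-β) fun k => lse β fun j => (∑ i, w k j i * x i) - b k j

lemma sum_exp_pos {n : ℕ} [Nonempty (Fin n)] (y : Fin n → ℝ) :
    0 < ∑ i, Real.exp (y i) :=
  Finset.sum_pos (fun i _ => Real.exp_pos _) Finset.univ_nonempty

lemma le_lse {β : ℝ} (hβ : 0 < β) {n : ℕ} [Nonempty (Fin n)] (x : Fin n → ℝ) (i : Fin n) :
    x i ≤ lse β x := by
  have hs : Real.exp (β * x i) ≤ ∑ j, Real.exp (β * x j) :=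
    Finset.single_le_sum (f := fun j => Real.exp (β * x j))
      (fun j _ => (Real.exp_pos _).le) (Finset.mem_univ i)
  have hlog : β * x i ≤ Real.log (∑ j, Real.exp (β * x j)) := by
    have := Real.log_le_log (Real.exp_pos _) hs
    rwa [Real.log_exp] at this
  have := mul_le_mul_of_nonneg_left hlog (le_of_lt (one_div_pos.mpr hβ))
  calc x i = (1/β) * (β * x i) := by field_simp
    _ ≤ lse β x := this

lemma lse_le {β : ℝ} (hβ : 0 < β) {n : ℕ} [Nonempty (Fin n)] (x : Fin n → ℝ) :
    lse β x ≤ Finset.univ.sup' Finset.univ_nonempty x + Real.log n / β := by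
  set M := Finset.univ.sup' Finset.univ_nonempty x with hM
  have hs : ∑ j, Real.exp (β * x j) ≤ n * Real.exp (β * M) := by
    calc ∑ j, Real.exp (β * x j) ≤ ∑ _j : Fin n, Real.exp (β * M) := by
          apply Finset.sum_le_sum
          intro j _
          exact Real.exp_le_exp.mpr (mul_le_mul_of_nonneg_left
            (Finset.le_sup' x (Finset.mem_univ j)) hβ.le)
      _ = n * Real.exp (β * M) := by simp [Finset.sum_const, nsmul_eq_mul]
  have hlog : Real.log (∑ j, Real.exp (β * x j)) ≤ Real.log n + β * M := by
    have h1 := Real.log_le_log (sum_exp_pos _) hs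
    have hn : (0:ℝ) < n := by
      have : 0 < n := Fin.pos_iff_nonempty.mpr ‹_›
      exact_mod_cast this
    rwa [Real.log_mul (ne_of_gt hn) (Real.exp_ne_zero _), Real.log_exp] at h1
  have := mul_le_mul_of_nonneg_left hlog (le_of_lt (one_div_pos.mpr hβ))
  calc lse β x ≤ (1/β) * (Real.log n + β * M) := this
    _ = M + Real.log n / β := by field_simp; ring

lemma lse_neg_eq {β : ℝ} {n : ℕ} (x : Fin n → ℝ) :
    lse (-β) x = - lse β (fun i => - x i) := by
  unfold lse
  have : ∀ i, (-β) * x i = β * (- x i) := fun i => by ring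
  simp_rw [this]
  ring

lemma lse_neg_le {β : ℝ} (hβ : 0 < β) {n : ℕ} [Nonempty (Fin n)] (x : Fin n → ℝ) (i : Fin n) :
    lse (-β) x ≤ x i := by
  rw [lse_neg_eq]
  have := le_lse hβ (fun i => - x i) i
  linarith

lemma inf_sub_le_lse_neg {β : ℝ} (hβ : 0 < β) {n : ℕ} [Nonempty (Fin n)] (x : Fin n → ℝ) :
    Finset.univ.inf' Finset.univ_nonempty x - Real.log n / β ≤ lse (-β) x := by
  rw [lse_neg_eq]
  have h1 := lse_le hβ (fun i => - x i)
  have h2 : Finset.univ.sup' Finset.univ_nonempty (fun i => - x i)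
      ≤ - Finset.univ.inf' Finset.univ_nonempty x := by
    apply Finset.sup'_le
    intro i _
    exact neg_le_neg (Finset.inf'_le x (Finset.mem_univ i))
  linarith

/-- For every MM network and every `δ > 0` there is `β > 0` such that the SMM network
with the same weights and biases satisfies `|y(x) − y_SMM(x)| ≤ δ` for all `x`. -/
theorem exists_beta_smm_close {d K : ℕ} {h : Fin K → ℕ} (hK : 0 < K) (hh : ∀ k, 0 < h k)
    (w : (k : Fin K) → Fin (h k) → Fin d → ℝ) (hw : ∀ k j i, 0 ≤ w k j i)
    (b : (k : Fin K) → Fin (h k) → ℝ)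
    (δ : ℝ) (hδ : 0 < δ) :
    ∃ β : ℝ, 0 < β ∧ ∀ x : Fin d → ℝ,
      |mmOut hK hh w b x - smmOut β w b x| ≤ δ := by
  haveI : Nonempty (Fin K) := Fin.pos_iff_nonempty.mp hK
  haveI : ∀ k, Nonempty (Fin (h k)) := fun k => Fin.pos_iff_nonempty.mp (hh k)
  set N : ℕ := K + ∑ k, h k with hN
  have hKN : K ≤ N := Nat.le_add_right _ _
  have hhN : ∀ k, h k ≤ N := fun k =>
    le_trans (Finset.single_le_sum (f := h) (fun k _ => Nat.zero_le _) (Finset.mem_univ k))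
      (Nat.le_add_left _ _)
  set C : ℝ := Real.log N with hC
  set β : ℝ := max 1 (C / δ) with hβdef
  have hβ : (0:ℝ) < β := lt_of_lt_of_le one_pos (le_max_left _ _)
  have hCβ : C / β ≤ δ := by
    rw [div_le_iff₀ hβ]
    have h1 : C / δ ≤ β := le_max_right _ _
    calc C ≤ (C / δ) * δ := by rw [div_mul_cancel₀ _ (ne_of_gt hδ)]
      _ ≤ β * δ := by gcongr
      _ = δ * β := mul_comm _ _
  have hlogK : Real.log K ≤ C := by
    apply Real.log_le_log
    · exact_mod_cast hK
    · exact_mod_cast hKN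
  have hlogh : ∀ k, Real.log (h k) ≤ C := fun k => by
    apply Real.log_le_log
    · exact_mod_cast hh k
    · exact_mod_cast hhN k
  refine ⟨β, hβ, fun x => ?_⟩
  set a : (k : Fin K) → Fin (h k) → ℝ :=
    fun k j => (∑ i, w k j i * x i) - b k j with ha
  set g : Fin K → ℝ := fun k => lse β (a k) with hg
  set M : Fin K → ℝ := fun k => Finset.univ.sup' Finset.univ_nonempty (a k) with hM
  have hmm : mmOut hK hh w b x = Finset.univ.inf' Finset.univ_nonempty M := rfl
  have hsmm : smmOut β w b x = lse (-β) g := rfl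
  have hg_lb : ∀ k, M k ≤ g k := fun k =>
    Finset.sup'_le _ _ (fun j _ => le_lse hβ (a k) j)
  have hg_ub : ∀ k, g k ≤ M k + C / β := fun k => by
    have h1 := lse_le hβ (a k)
    have h2 : Real.log (h k) / β ≤ C / β := by gcongr; exact hlogh k
    linarith
  set mm := Finset.univ.inf' Finset.univ_nonempty M with hmm'
  set ig := Finset.univ.inf' Finset.univ_nonempty g with hig
  have h1 : mm ≤ ig := Finset.le_inf' _ _ (fun k _ =>
    le_trans (Finset.inf'_le M (Finset.mem_univ k)) (hg_lb k))
  have h2 : ig ≤ mm + C / β := by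
    have : mm = ig - (ig - mm) := by ring
    apply sub_le_iff_le_add.mp
    apply Finset.le_inf' (f := M)
    intro k _
    have := Finset.inf'_le g (Finset.mem_univ k)
    have := hg_ub k
    linarith
  have h3 : lse (-β) g ≤ ig := Finset.le_inf' _ _ (fun k _ => lse_neg_le hβ g k)
  have h4 : ig - C / β ≤ lse (-β) g := by
    have h5 := inf_sub_le_lse_neg hβ g
    have h6 : Real.log K / β ≤ C / β := by gcongr
    linarith
  rw [hmm, hsmm]
  rw [abs_le]
  constructor <;> [skip; skip] <;> linarith
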